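/- Let n, k be natural numbers with 1 < k < n/2, let p ≥ 1 and −1/2 ≤ λ ≤ 0 be real numbers, and for a real parameter μ ∈ [λ, 0] define a(μ) = −2|μ|^p − 2|1+μ|^p + |1+2μ|^p, b(μ) = 2(3k−n)|μ|^p + 2k|1+μ|^p + (1−2k)|1+2μ|^p, c(μ) = 2k(n−2k)|μ|^p + k(k−1)|1+2μ|^p. Set t₀ = −b(λ)/(2a(λ)). If t₁ is a positive integer with t₁ ≤ ⌊t₀ + 1/2⌋, then there exists μ ∈ [λ, 0] such that for every integer t with 0 ≤ t ≤ k, a(μ) t² + b(μ) t + c(μ) ≤ a(μ) t₁² + b(μ) t₁ + c(μ). -/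

import Mathlib

/-- Let `1 < k < n/2`, `p ≥ 1`, `−1/2 ≤ λ ≤ 0`, and for `μ ∈ [λ, 0]` define
`a(μ) = −2|μ|^p − 2|1+μ|^p + |1+2μ|^p`,
`b(μ) = 2(3k−n)|μ|^p + 2k|1+μ|^p + (1−2k)|1+2μ|^p`,
`c(μ) = 2k(n−2k)|μ|^p + k(k−1)|1+2μ|^p`, and set `t₀ = −b(λ)/(2a(λ))`.
If `t₁` is a positive integer with `t₁ ≤ ⌊t₀ + 1/2⌋`, then there exists `μ ∈ [λ, 0]` such
that for every integer `t` with `0 ≤ t ≤ k`,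
`a(μ) t² + b(μ) t + c(μ) ≤ a(μ) t₁² + b(μ) t₁ + c(μ)`. -/
theorem exists_mu_integer_max_at_t1
    (n k : ℕ) (p lam : ℝ) (t₁ : ℕ) (hk : 1 < k) (hkn : 2 * k < n)
    (hp : 1 ≤ p) (hlam₁ : -(1/2) ≤ lam) (hlam₂ : lam ≤ 0)
    (a b c : ℝ → ℝ)
    (ha : ∀ μ : ℝ, a μ = -2 * |μ| ^ p - 2 * |1 + μ| ^ p + |1 + 2*μ| ^ p)
    (hb : ∀ μ : ℝ, b μ = 2 * (3 * (k : ℝ) - n) * |μ| ^ p + 2 * k * |1 + μ| ^ p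
        + (1 - 2 * (k : ℝ)) * |1 + 2*μ| ^ p)
    (hc : ∀ μ : ℝ, c μ = 2 * k * ((n : ℝ) - 2 * k) * |μ| ^ p
        + k * ((k : ℝ) - 1) * |1 + 2*μ| ^ p)
    (t₀ : ℝ) (ht₀ : t₀ = -(b lam) / (2 * a lam))
    (ht₁pos : 0 < t₁) (ht₁le : (t₁ : ℤ) ≤ ⌊t₀ + 1/2⌋) :
    ∃ μ : ℝ, lam ≤ μ ∧ μ ≤ 0 ∧
      ∀ t : ℤ, 0 ≤ t → t ≤ (k : ℤ) →
        a μ * (t : ℝ)^2 + b μ * (t : ℝ) + c μ ≤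
          a μ * (t₁ : ℝ)^2 + b μ * (t₁ : ℝ) + c μ := by
  have hp0 : 0 < p := lt_of_lt_of_le one_pos hp
  -- a μ < 0 on [lam, 0]
  have haneg : ∀ μ : ℝ, lam ≤ μ → μ ≤ 0 → a μ < 0 := by
    intro μ h1 h2
    have h12 : (0:ℝ) ≤ 1 + 2*μ := by linarith
    have hle : (1 + 2*μ : ℝ) ≤ 1 + μ := by linarith
    have hpow : |1 + 2*μ| ^ p ≤ |1 + μ| ^ p := by
      rw [abs_of_nonneg h12, abs_of_nonneg (by linarith : (0:ℝ) ≤ 1 + μ)]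
      exact Real.rpow_le_rpow h12 hle (le_of_lt hp0)
    have h1μ : (0:ℝ) < |1 + μ| ^ p := by
      rw [abs_of_nonneg (by linarith : (0:ℝ) ≤ 1 + μ)]
      exact Real.rpow_pos_of_pos (by linarith) p
    have hμ : (0:ℝ) ≤ |μ| ^ p := Real.rpow_nonneg (abs_nonneg μ) p
    rw [ha]
    linarith
  -- continuity of the auxiliary function  h μ = b μ + (2*t₁ - 1) * a μ
  set T : ℝ := 2 * (t₁ : ℝ) - 1 with hT
  have hcont : ContinuousOn (fun μ => b μ + T * a μ) (Set.Icc lam 0) := by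
    have c1 : Continuous fun μ : ℝ => |μ| ^ p :=
      continuous_abs.rpow_const (fun x => Or.inr (le_of_lt hp0))
    have c2 : Continuous fun μ : ℝ => |1 + μ| ^ p :=
      ((continuous_const.add continuous_id).abs).rpow_const (fun x => Or.inr (le_of_lt hp0))
    have c3 : Continuous fun μ : ℝ => |1 + 2*μ| ^ p :=
      ((continuous_const.add (continuous_const.mul continuous_id)).abs).rpow_const
        (fun x => Or.inr (le_of_lt hp0))
    have : Continuous fun μ : ℝ =>
        (2 * (3 * (k : ℝ) - n) * |μ| ^ p + 2 * k * |1 + μ| ^ p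
          + (1 - 2 * (k : ℝ)) * |1 + 2*μ| ^ p)
        + T * (-2 * |μ| ^ p - 2 * |1 + μ| ^ p + |1 + 2*μ| ^ p) := by
      fun_prop
    have heq : (fun μ => b μ + T * a μ) = fun μ =>
        (2 * (3 * (k : ℝ) - n) * |μ| ^ p + 2 * k * |1 + μ| ^ p
          + (1 - 2 * (k : ℝ)) * |1 + 2*μ| ^ p)
        + T * (-2 * |μ| ^ p - 2 * |1 + μ| ^ p + |1 + 2*μ| ^ p) := by
      funext μ; rw [hb, ha]
    rw [heq]
    exact this.continuousOn
  -- value at 0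
  have ha0 : a 0 = -1 := by
    rw [ha]; simp [Real.zero_rpow (ne_of_gt hp0), Real.one_rpow]; norm_num
  have hb0 : b 0 = 1 := by
    rw [hb]; simp [Real.zero_rpow (ne_of_gt hp0), Real.one_rpow]
  have hend0 : b 0 + T * a 0 ≤ 0 := by
    rw [ha0, hb0, hT]
    have : (1:ℝ) ≤ (t₁:ℝ) := by exact_mod_cast ht₁pos
    nlinarith
  -- value at lam
  have halam : a lam < 0 := haneg lam le_rfl hlam₂
  have ht0ge : (t₁ : ℝ) - 1/2 ≤ t₀ := by
    have := Int.le_floor.mp ht₁le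
    push_cast at this
    linarith
  have hendlam : 0 ≤ b lam + T * a lam := by
    have h2a : 2 * a lam ≠ 0 := by linarith
    have hblam : -b lam = t₀ * (2 * a lam) := by
      rw [ht₀]; rw [div_mul_cancel₀ _ h2a]
    rw [hT]
    nlinarith [hblam, mul_nonneg (neg_nonneg.mpr halam.le)
      (by linarith : (0:ℝ) ≤ t₀ - ((t₁:ℝ) - 1/2))]
  -- IVT
  obtain ⟨μ, hμmem, hμ0⟩ : ∃ μ ∈ Set.Icc lam 0, b μ + T * a μ = 0 := by
    have hsub := intermediate_value_Icc' (by linarith : lam ≤ (0:ℝ)) hcont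
    have h0mem : (0:ℝ) ∈ Set.Icc (b 0 + T * a 0) (b lam + T * a lam) :=
      ⟨hend0, hendlam⟩
    obtain ⟨μ, hμ, hval⟩ := hsub h0mem
    exact ⟨μ, hμ, hval⟩
  obtain ⟨hμ1, hμ2⟩ := hμmem
  refine ⟨μ, hμ1, hμ2, ?_⟩
  intro t ht0' htk
  have haμ : a μ < 0 := haneg μ hμ1 hμ2
  have hbμ : b μ = -T * a μ := by linarith
  -- (t - t₁)(t - t₁ + 1) ≥ 0 for integers
  have hkey : (0:ℝ) ≤ ((t : ℝ) - t₁) * ((t : ℝ) - t₁ + 1) := by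
    rcases le_or_gt (t₁ : ℤ) t with h | h
    · have h1 : (t₁ : ℝ) ≤ (t : ℝ) := by exact_mod_cast h
      nlinarith
    · have h2 : t + 1 ≤ (t₁ : ℤ) := h
      have h2' : (t : ℝ) + 1 ≤ (t₁ : ℝ) := by exact_mod_cast h2
      nlinarith
  rw [hbμ, hT]
  nlinarith [mul_nonpos_of_nonpos_of_nonneg (le_of_lt haμ) hkey]
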